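/- arXiv:2306.02641 — 2 statements merged into one kernel-verified Lean document; each statement's English description precedes it below -/
import Mathlib

section
/- Let x be a complex number with |x| > 64. Then ∑_{k=0}^∞ (C(2k,k)·C(4k,2k)/x^k)·(2H_{4k} − H_{2k}) = (1/2)·log(x/(x−64)) · ∑_{k=0}^∞ C(2k,k)·C(4k,2k)/x^k, both series being convergent. -/
/-- The `n`-th harmonic number `H_n = ∑_{i=1}^n 1/i`. -/
noncomputable def harm (n : ℕ) : ℝ := ∑ i ∈ Finset.range n, 1 / (i + 1 : ℝ)

open Finset

noncomputable def Acoef (k : ℕ) : ℝ :=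
  (Nat.choose (2 * k) k : ℝ) * (Nat.choose (4 * k) (2 * k) : ℝ)

lemma Acoef_eq (k : ℕ) :
    Acoef k = (Nat.centralBinom k : ℝ) * (Nat.centralBinom (2 * k) : ℝ) := by
  have : 4 * k = 2 * (2 * k) := by ring
  simp [Acoef, Nat.centralBinom, this]

lemma Acoef_rec (k : ℕ) :
    ((k : ℝ) + 1) ^ 2 * Acoef (k + 1) = 4 * (4 * k + 1) * (4 * k + 3) * Acoef k := by
  have e1 : ((k : ℝ) + 1) * Nat.centralBinom (k + 1)
      = 2 * (2 * k + 1) * Nat.centralBinom k := by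
    exact_mod_cast congrArg (Nat.cast (R := ℝ)) (Nat.succ_mul_centralBinom_succ k)
  have e2 : ((2 * k : ℝ) + 1 + 1) * Nat.centralBinom (2 * k + 1 + 1)
      = 2 * (2 * (2 * k + 1) + 1) * Nat.centralBinom (2 * k + 1) := by
    exact_mod_cast congrArg (Nat.cast (R := ℝ)) (Nat.succ_mul_centralBinom_succ (2 * k + 1))
  have e3 : ((2 * k : ℝ) + 1) * Nat.centralBinom (2 * k + 1)
      = 2 * (2 * (2 * k) + 1) * Nat.centralBinom (2 * k) := by
    exact_mod_cast congrArg (Nat.cast (R := ℝ)) (Nat.succ_mul_centralBinom_succ (2 * k))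
  have h2 : 2 * (k + 1) = 2 * k + 1 + 1 := by ring
  rw [Acoef_eq, Acoef_eq, h2]
  set C1 := (Nat.centralBinom (k + 1) : ℝ)
  set C2 := (Nat.centralBinom (2 * k + 1 + 1) : ℝ)
  set c0 := (Nat.centralBinom k : ℝ)
  set d0 := (Nat.centralBinom (2 * k) : ℝ)
  set d1 := (Nat.centralBinom (2 * k + 1) : ℝ)
  linear_combination (((k : ℝ) + 1) * C2) * e1 + ((2 * k + 1) * c0) * e2
    + (2 * (4 * k + 3) * c0) * e3

noncomputable def hh (k : ℕ) : ℝ := 2 * harm (4 * k) - harm (2 * k)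

lemma hh_rec (k : ℕ) :
    hh (k + 1) = hh k + 2 / (4 * k + 1) + 2 / (4 * k + 3) := by
  have h4 : 4 * (k + 1) = 4 * k + 1 + 1 + 1 + 1 := by ring
  have h2 : 2 * (k + 1) = 2 * k + 1 + 1 := by ring
  simp only [hh, h4, h2, harm, Finset.sum_range_succ]
  push_cast
  have n1 : (4 * (k : ℝ) + 1) ≠ 0 := by positivity
  have n2 : (4 * (k : ℝ) + 2) ≠ 0 := by positivity
  have n3 : (4 * (k : ℝ) + 3) ≠ 0 := by positivity
  have n4 : (4 * (k : ℝ) + 4) ≠ 0 := by positivity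
  have n5 : (2 * (k : ℝ) + 1) ≠ 0 := by positivity
  have n6 : (2 * (k : ℝ) + 2) ≠ 0 := by positivity
  field_simp
  ring

noncomputable def gg (n k : ℕ) : ℝ := 64 ^ (n - k) / ((n - k : ℕ) : ℝ) * Acoef k

noncomputable def ww (n k : ℕ) : ℝ :=
  -64 * k ^ 2 * 64 ^ (n - k) * Acoef k / ((n + 1 - k : ℕ) : ℝ)

lemma tel (n k : ℕ) (hk : k < n) :
    ww n (k + 1) - ww n k
      = ((n : ℝ) + 1) ^ 2 * gg (n + 1) k - 4 * (4 * n + 1) * (4 * n + 3) * gg n k := by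
  obtain ⟨m, rfl⟩ : ∃ m, n = k + m + 1 := ⟨n - k - 1, by omega⟩
  have h1 : k + m + 1 - k = m + 1 := by omega
  have h2 : k + m + 1 - (k + 1) = m := by omega
  have h3 : k + m + 1 + 1 - k = m + 2 := by omega
  have h4 : k + m + 1 + 1 - (k + 1) = m + 1 := by omega
  simp only [ww, gg, h1, h2, h3, h4]
  have e := Acoef_rec k
  have hk1 : ((k : ℝ) + 1) ≠ 0 := by positivity
  have hA : Acoef (k + 1) = 4 * (4 * k + 1) * (4 * k + 3) * Acoef k / ((k : ℝ) + 1) ^ 2 := by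
    field_simp
    linarith [e]
  rw [hA]
  push_cast
  have m1 : ((m : ℝ) + 1) ≠ 0 := by positivity
  have m2 : ((m : ℝ) + 2) ≠ 0 := by positivity
  field_simp
  ring

lemma key (n : ℕ) : ∑ k ∈ range (n + 1), gg n k = 2 * Acoef n * hh n := by
  induction n with
  | zero => simp [gg, hh, harm]
  | succ n ih =>
    have hsum : ∑ k ∈ range n,
        (((n : ℝ) + 1) ^ 2 * gg (n + 1) k - 4 * (4 * n + 1) * (4 * n + 3) * gg n k)
        = ww n n - ww n 0 := by
      rw [← Finset.sum_range_sub (ww n)]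
      exact Finset.sum_congr rfl fun k hk => (tel n k (mem_range.mp hk)).symm
    have hwn : ww n n = -64 * n ^ 2 * Acoef n := by
      rw [ww, Nat.sub_self, show n + 1 - n = 1 from by omega]
      push_cast; ring
    have hw0 : ww n 0 = 0 := by simp [ww]
    have hg1 : gg (n + 1) (n + 1) = 0 := by simp [gg, Nat.sub_self]
    have hg2 : gg (n + 1) n = 64 * Acoef n := by
      rw [gg, show n + 1 - n = 1 from by omega]; push_cast; ring
    have hg3 : gg n n = 0 := by simp [gg, Nat.sub_self]
    have S1 : ((n : ℝ) + 1) ^ 2 * (∑ k ∈ range (n + 1 + 1), gg (n + 1) k)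
        = 4 * (4 * n + 1) * (4 * n + 3) * (∑ k ∈ range (n + 1), gg n k)
          + 64 * (2 * n + 1) * Acoef n := by
      rw [Finset.sum_range_succ, Finset.sum_range_succ, hg1, hg2,
        Finset.sum_range_succ, hg3]
      rw [Finset.sum_sub_distrib, hwn, hw0] at hsum
      rw [show (∑ k ∈ range n, ((n:ℝ)+1)^2 * gg (n+1) k)
          = ((n:ℝ)+1)^2 * ∑ k ∈ range n, gg (n+1) k from by rw [Finset.mul_sum],
        show (∑ k ∈ range n, 4*(4*(n:ℝ)+1)*(4*(n:ℝ)+3) * gg n k)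
          = 4*(4*(n:ℝ)+1)*(4*(n:ℝ)+3) * ∑ k ∈ range n, gg n k from by rw [Finset.mul_sum]] at hsum
      linear_combination hsum
    have hA := Acoef_rec n
    have hH := hh_rec n
    have hn1 : ((n : ℝ) + 1) ≠ 0 := by positivity
    have d1 : (4 * (n : ℝ) + 1) ≠ 0 := by positivity
    have d3 : (4 * (n : ℝ) + 3) ≠ 0 := by positivity
    have goal2 : ((n : ℝ) + 1) ^ 2 * (∑ k ∈ range (n + 1 + 1), gg (n + 1) k)
        = ((n : ℝ) + 1) ^ 2 * (2 * Acoef (n + 1) * hh (n + 1)) := by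
      rw [S1, ih, hH]
      have : 2 * Acoef (n + 1) * (hh n + 2 / (4 * ↑n + 1) + 2 / (4 * ↑n + 3)) * ((n:ℝ)+1)^2
          = 2 * (((n:ℝ)+1)^2 * Acoef (n+1)) * (hh n + 2 / (4 * ↑n + 1) + 2 / (4 * ↑n + 3)) := by
        ring
      rw [show ((n:ℝ)+1)^2 * (2 * Acoef (n + 1) * (hh n + 2 / (4 * ↑n + 1) + 2 / (4 * ↑n + 3)))
          = 2 * (((n:ℝ)+1)^2 * Acoef (n+1)) * (hh n + 2 / (4 * ↑n + 1) + 2 / (4 * ↑n + 3)) from by ring,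
        hA]
      field_simp
      ring
    have := mul_left_cancel₀ (pow_ne_zero 2 hn1) goal2
    push_cast at this ⊢
    exact this

lemma key' (n : ℕ) :
    ∑ m ∈ range (n + 1), 64 ^ m / (m : ℝ) * Acoef (n - m) = 2 * Acoef n * hh n := by
  rw [← key n, ← Finset.sum_range_reflect (fun m => 64 ^ m / (m : ℝ) * Acoef (n - m)) (n + 1)]
  refine Finset.sum_congr rfl fun j hj => ?_
  rw [mem_range] at hj
  rw [gg, show n + 1 - 1 - j = n - j from by omega, show n - (n - j) = j from by omega]

lemma choose_le_two_pow (n k : ℕ) : n.choose k ≤ 2 ^ n := by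
  rcases le_or_gt k n with h | h
  · calc n.choose k ≤ ∑ m ∈ range (n + 1), n.choose m :=
        Finset.single_le_sum (fun _ _ => Nat.zero_le _) (mem_range.mpr (by omega))
    _ = 2 ^ n := Nat.sum_range_choose n
  · rw [Nat.choose_eq_zero_of_lt h]; exact Nat.zero_le _

lemma Acoef_nonneg (k : ℕ) : 0 ≤ Acoef k := by
  unfold Acoef; positivity

lemma Acoef_le (k : ℕ) : Acoef k ≤ 64 ^ k := by
  have h1 : (Nat.choose (2 * k) k : ℝ) ≤ 2 ^ (2 * k) := by
    exact_mod_cast Nat.cast_le.mpr (choose_le_two_pow (2 * k) k)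
  have h2 : (Nat.choose (4 * k) (2 * k) : ℝ) ≤ 2 ^ (4 * k) := by
    exact_mod_cast Nat.cast_le.mpr (choose_le_two_pow (4 * k) (2 * k))
  have : (2 : ℝ) ^ (2 * k) * 2 ^ (4 * k) = 64 ^ k := by
    rw [← pow_add, show 2 * k + 4 * k = 6 * k from by ring, pow_mul]
    norm_num
  calc Acoef k ≤ 2 ^ (2 * k) * 2 ^ (4 * k) := by
        exact mul_le_mul h1 h2 (by positivity) (by positivity)
    _ = 64 ^ k := this

theorem stmt_10 (x : ℂ) (hx : ‖x‖ > 64) :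
    Summable (fun k : ℕ => (((Nat.choose (2 * k) k : ℝ) * (Nat.choose (4 * k) (2 * k) : ℝ) : ℝ) : ℂ) / x ^ k * ((2 * harm (4 * k) - harm (2 * k) : ℝ) : ℂ)) ∧
    Summable (fun k : ℕ => (((Nat.choose (2 * k) k : ℝ) * (Nat.choose (4 * k) (2 * k) : ℝ) : ℝ) : ℂ) / x ^ k) ∧
    ∑' k : ℕ, (((Nat.choose (2 * k) k : ℝ) * (Nat.choose (4 * k) (2 * k) : ℝ) : ℝ) : ℂ) / x ^ k * ((2 * harm (4 * k) - harm (2 * k) : ℝ) : ℂ) =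
      (1 / 2 : ℂ) * Complex.log (x / (x - 64)) * ∑' k : ℕ, (((Nat.choose (2 * k) k : ℝ) * (Nat.choose (4 * k) (2 * k) : ℝ) : ℝ) : ℂ) / x ^ k := by
  show Summable (fun k : ℕ => ((Acoef k : ℝ) : ℂ) / x ^ k * ((hh k : ℝ) : ℂ)) ∧
    Summable (fun k : ℕ => ((Acoef k : ℝ) : ℂ) / x ^ k) ∧
    ∑' k : ℕ, ((Acoef k : ℝ) : ℂ) / x ^ k * ((hh k : ℝ) : ℂ)
      = (1 / 2 : ℂ) * Complex.log (x / (x - 64)) * ∑' k : ℕ, ((Acoef k : ℝ) : ℂ) / x ^ k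
  have hxnorm : (64 : ℝ) < ‖x‖ := by exact hx
  have hxpos : (0 : ℝ) < ‖x‖ := by linarith
  have hx0 : x ≠ 0 := by
    intro h; rw [h, norm_zero] at hxnorm; linarith
  set z : ℂ := 64 / x with hzdef
  have hznorm : ‖z‖ = 64 / ‖x‖ := by
    rw [hzdef, norm_div]; norm_num
  have hz1 : ‖z‖ < 1 := by
    rw [hznorm, div_lt_one hxpos]; exact hxnorm
  set f : ℕ → ℂ := fun m => z ^ m / (m : ℂ) with hfdef
  set F : ℕ → ℂ := fun k => ((Acoef k : ℝ) : ℂ) / x ^ k with hFdef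
  -- summable norms
  have hfnorm : Summable fun m => ‖f m‖ := by
    refine Summable.of_nonneg_of_le (fun _ => norm_nonneg _) (fun m => ?_)
      (summable_geometric_of_lt_one (norm_nonneg z) hz1)
    rw [hfdef]
    simp only [norm_div, norm_pow, Complex.norm_natCast]
    cases m with
    | zero => simp
    | succ m =>
      refine div_le_self (by positivity) ?_
      exact_mod_cast Nat.succ_le_succ (Nat.zero_le m)
  have hFnorm : Summable fun k => ‖F k‖ := by
    refine Summable.of_nonneg_of_le (fun _ => norm_nonneg _) (fun k => ?_)
      (summable_geometric_of_lt_one (by positivity : (0:ℝ) ≤ 64 / ‖x‖)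
        (by rw [div_lt_one hxpos]; exact hxnorm))
    rw [hFdef]
    simp only [norm_div, Complex.norm_real, norm_pow]
    rw [Real.norm_of_nonneg (Acoef_nonneg k), div_pow]
    have hxk : (0:ℝ) < ‖x‖ ^ k := by positivity
    rw [div_le_div_iff₀ hxk hxk]
    have := Acoef_le k
    nlinarith [pow_pos hxpos k, Acoef_nonneg k]
  -- the inner antidiagonal sums
  have hinner : ∀ n : ℕ, ∑ kl ∈ Finset.HasAntidiagonal.antidiagonal n, f kl.1 * F kl.2
      = 2 * (((Acoef n : ℝ) : ℂ) / x ^ n * ((hh n : ℝ) : ℂ)) := by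
    intro n
    rw [Finset.Nat.sum_antidiagonal_eq_sum_range_succ_mk]
    have hterm : ∀ m ∈ range (n + 1),
        f m * F (n - m) = (((64 : ℝ) ^ m / (m : ℝ) * Acoef (n - m) : ℝ) : ℂ) / x ^ n := by
      intro m hm
      rw [mem_range] at hm
      have hmn : m ≤ n := by omega
      have hxinv : (x ^ m)⁻¹ * (x ^ (n - m))⁻¹ = (x ^ n)⁻¹ := by
        rw [← mul_inv, ← pow_add, Nat.add_sub_cancel' hmn]
      rw [hfdef, hFdef]
      push_cast
      simp only [div_pow, div_eq_mul_inv]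
      rw [← hxinv]
      ring
    rw [Finset.sum_congr rfl hterm, ← Finset.sum_div, ← Complex.ofReal_sum, key' n]
    push_cast
    ring
  -- Cauchy product
  have hprod := tsum_mul_tsum_eq_tsum_sum_antidiagonal_of_summable_norm hfnorm hFnorm
  have hpsum : Summable fun n => ∑ kl ∈ Finset.HasAntidiagonal.antidiagonal n, f kl.1 * F kl.2 :=
    summable_sum_mul_antidiagonal_of_summable_mul
      (summable_mul_of_summable_norm hfnorm hFnorm)
  have hps2 : Summable fun n => 2 * (((Acoef n : ℝ) : ℂ) / x ^ n * ((hh n : ℝ) : ℂ)) :=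
    hpsum.congr hinner
  have hs1 : Summable fun n => ((Acoef n : ℝ) : ℂ) / x ^ n * ((hh n : ℝ) : ℂ) := by
    have h2 := hps2.div_const 2
    refine h2.congr fun n => ?_
    rw [mul_div_cancel_left₀ _ (two_ne_zero)]
  refine ⟨hs1, hFnorm.of_norm, ?_⟩
  -- the log identity
  have hlog : HasSum f (-Complex.log (1 - z)) := Complex.hasSum_taylorSeries_neg_log hz1
  have h1z : (1 : ℂ) - z = (x - 64) / x := by
    rw [hzdef]; field_simp
  have hre : (0 : ℝ) < (1 - z).re := by
    have h1 : |z.re| ≤ ‖z‖ := by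
      exact Complex.abs_re_le_norm z
    have h2 : z.re ≤ |z.re| := le_abs_self _
    simp only [Complex.sub_re, Complex.one_re]
    linarith
  have harg : ((x - 64) / x).arg ≠ Real.pi := by
    rw [← h1z]
    intro h
    rw [Complex.arg_eq_pi_iff] at h
    linarith [h.1]
  have hlogeq : Complex.log (x / (x - 64)) = -Complex.log ((x - 64) / x) := by
    rw [show x / (x - 64) = ((x - 64) / x)⁻¹ from by rw [inv_div],
      Complex.log_inv _ harg]
  -- Cauchy product conclusion
  rw [funext hinner] at hprod
  rw [tsum_mul_left, hlog.tsum_eq, h1z] at hprod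
  -- hprod : -log ((x-64)/x) * ∑' F = 2 * ∑' n, s n
  rw [hlogeq]
  linear_combination (-(1 / 2) : ℂ) * hprod
end

section
/- Let x be a complex number with |x| > 432. Then ∑_{k=0}^∞ (C(3k,k)·C(6k,3k)/x^k)·(6H_{6k} − 3H_{3k} − 2H_{2k} + H_k) = log(x/(x−432)) · ∑_{k=0}^∞ C(3k,k)·C(6k,3k)/x^k, both series being convergent. -/
open Finset

noncomputable def cc (k : ℕ) : ℝ := (Nat.choose (3 * k) k : ℝ) * (Nat.choose (6 * k) (3 * k) : ℝ)

lemma cc_pos (k : ℕ) : 0 < cc k := by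
  unfold cc
  have h1 : 0 < Nat.choose (3 * k) k := Nat.choose_pos (by omega)
  have h2 : 0 < Nat.choose (6 * k) (3 * k) := Nat.choose_pos (by omega)
  positivity

lemma cc_fact (k : ℕ) :
    cc k * ((Nat.factorial (3 * k) : ℝ) * (Nat.factorial (2 * k) : ℝ) * (Nat.factorial k : ℝ))
      = (Nat.factorial (6 * k) : ℝ) := by
  have h1 : Nat.choose (6 * k) (3 * k) * Nat.factorial (3 * k) * Nat.factorial (3 * k)
      = Nat.factorial (6 * k) := by
    have := Nat.choose_mul_factorial_mul_factorial (show 3 * k ≤ 6 * k by omega)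
    rwa [show 6 * k - 3 * k = 3 * k by omega] at this
  have h2 : Nat.choose (3 * k) k * Nat.factorial k * Nat.factorial (2 * k)
      = Nat.factorial (3 * k) := by
    have := Nat.choose_mul_factorial_mul_factorial (show k ≤ 3 * k by omega)
    rwa [show 3 * k - k = 2 * k by omega] at this
  unfold cc
  have h1' : ((Nat.choose (6 * k) (3 * k) : ℝ)) * (Nat.factorial (3 * k) : ℝ) * (Nat.factorial (3 * k) : ℝ)
      = (Nat.factorial (6 * k) : ℝ) := by exact_mod_cast congrArg (Nat.cast : ℕ → ℝ) h1
  have h2' : ((Nat.choose (3 * k) k : ℝ)) * (Nat.factorial k : ℝ) * (Nat.factorial (2 * k) : ℝ)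
      = (Nat.factorial (3 * k) : ℝ) := by exact_mod_cast congrArg (Nat.cast : ℕ → ℝ) h2
  linear_combination ((Nat.choose (6 * k) (3 * k) : ℝ) * (Nat.factorial (3 * k) : ℝ)) * h2' + h1'

lemma cc_rec (k : ℕ) :
    ((k : ℝ) + 1) ^ 2 * cc (k + 1) = 12 * (6 * k + 1) * (6 * k + 5) * cc k := by
  have f3 : (0:ℝ) < Nat.factorial (3 * k) := by exact_mod_cast Nat.factorial_pos _
  have f2 : (0:ℝ) < Nat.factorial (2 * k) := by exact_mod_cast Nat.factorial_pos _
  have f1 : (0:ℝ) < Nat.factorial k := by exact_mod_cast Nat.factorial_pos _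
  have e6 : (Nat.factorial (6 * (k + 1)) : ℝ)
      = (6*k+6) * (6*k+5) * (6*k+4) * (6*k+3) * (6*k+2) * (6*k+1) * (Nat.factorial (6 * k) : ℝ) := by
    rw [show 6 * (k + 1) = (6*k+5) + 1 by ring, Nat.factorial_succ,
        show 6*k+5 = (6*k+4) + 1 by ring, Nat.factorial_succ,
        show 6*k+4 = (6*k+3) + 1 by ring, Nat.factorial_succ,
        show 6*k+3 = (6*k+2) + 1 by ring, Nat.factorial_succ,
        show 6*k+2 = (6*k+1) + 1 by ring, Nat.factorial_succ,
        show 6*k+1 = (6*k) + 1 by ring, Nat.factorial_succ]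
    push_cast; ring
  have e3 : (Nat.factorial (3 * (k + 1)) : ℝ)
      = (3*k+3) * (3*k+2) * (3*k+1) * (Nat.factorial (3 * k) : ℝ) := by
    rw [show 3 * (k + 1) = (3*k+2) + 1 by ring, Nat.factorial_succ,
        show 3*k+2 = (3*k+1) + 1 by ring, Nat.factorial_succ,
        show 3*k+1 = (3*k) + 1 by ring, Nat.factorial_succ]
    push_cast; ring
  have e2 : (Nat.factorial (2 * (k + 1)) : ℝ)
      = (2*k+2) * (2*k+1) * (Nat.factorial (2 * k) : ℝ) := by
    rw [show 2 * (k + 1) = (2*k+1) + 1 by ring, Nat.factorial_succ,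
        show 2*k+1 = (2*k) + 1 by ring, Nat.factorial_succ]
    push_cast; ring
  have e1 : (Nat.factorial (k + 1) : ℝ) = (k+1) * (Nat.factorial k : ℝ) := by
    rw [Nat.factorial_succ]; push_cast; ring
  have hk1 := cc_fact (k + 1)
  have hk0 := cc_fact k
  rw [e6, e3, e2, e1] at hk1
  have h : cc (k+1) * ((3*(k:ℝ)+3)*(3*k+2)*(3*k+1)*((2*k+2)*(2*k+1))*((k:ℝ)+1))
      = (6*(k:ℝ)+6)*(6*k+5)*(6*k+4)*(6*k+3)*(6*k+2)*(6*k+1) * cc k := by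
    apply mul_right_cancel₀ (show (Nat.factorial (3*k) : ℝ) * (Nat.factorial (2*k) : ℝ) * (Nat.factorial k : ℝ) ≠ 0 by positivity)
    linear_combination hk1 - ((6*(k:ℝ)+6)*(6*k+5)*(6*k+4)*(6*k+3)*(6*k+2)*(6*k+1)) * hk0
  refine mul_right_cancel₀ (show ((3*(k:ℝ)+3)*(3*k+2)*(3*k+1)*((2*k+2)*(2*k+1))*((k:ℝ)+1)) ≠ 0 by positivity) ?_
  linear_combination ((k:ℝ)+1)^2 * h

lemma cc_zero : cc 0 = 1 := by simp [cc]

lemma cc_le (k : ℕ) : cc k ≤ 432 ^ k := by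
  induction k with
  | zero => simp [cc_zero]
  | succ k ih =>
    have h := cc_rec k
    have hk2 : (0:ℝ) < ((k:ℝ) + 1) ^ 2 := by positivity
    have hle : 12 * (6 * (k:ℝ) + 1) * (6 * k + 5) ≤ 432 * ((k:ℝ) + 1) ^ 2 := by nlinarith [(k.cast_nonneg : (0:ℝ) ≤ k)]
    have hc : cc (k + 1) ≤ 432 * cc k := by
      nlinarith [cc_pos k, cc_pos (k + 1)]
    calc cc (k + 1) ≤ 432 * cc k := hc
      _ ≤ 432 * 432 ^ k := by nlinarith [cc_pos k]
      _ = 432 ^ (k + 1) := by ring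

lemma harm_succ (n : ℕ) : harm (n + 1) = harm n + 1 / ((n : ℝ) + 1) := by
  rw [harm, harm, Finset.sum_range_succ]

lemma harm_nonneg (n : ℕ) : 0 ≤ harm n := by
  unfold harm; positivity

lemma harm_le (n : ℕ) : harm n ≤ n := by
  unfold harm
  calc ∑ i ∈ Finset.range n, 1 / ((i : ℝ) + 1) ≤ ∑ i ∈ Finset.range n, 1 := by
        apply Finset.sum_le_sum; intro i _
        rw [div_le_one (by positivity)]; linarith [(i.cast_nonneg : (0:ℝ) ≤ i)]
    _ = n := by simp

noncomputable def Ah (k : ℕ) : ℝ :=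
  6 * harm (6 * k) - 3 * harm (3 * k) - 2 * harm (2 * k) + harm k

lemma Ah_zero : Ah 0 = 0 := by simp [Ah, harm]

lemma Ah_rec (k : ℕ) :
    Ah (k + 1) = Ah k + 6 / (6 * (k:ℝ) + 1) + 6 / (6 * (k:ℝ) + 5) := by
  have h6 : harm (6 * (k + 1)) = harm (6 * k) + (1/(6*(k:ℝ)+1) + 1/(6*(k:ℝ)+2)
      + 1/(6*(k:ℝ)+3) + 1/(6*(k:ℝ)+4) + 1/(6*(k:ℝ)+5) + 1/(6*(k:ℝ)+6)) := by
    rw [show 6 * (k + 1) = 6*k+1+1+1+1+1+1 by ring, harm_succ, harm_succ, harm_succ,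
        harm_succ, harm_succ, harm_succ]
    push_cast; ring
  have h3 : harm (3 * (k + 1)) = harm (3 * k) + (1/(3*(k:ℝ)+1) + 1/(3*(k:ℝ)+2)
      + 1/(3*(k:ℝ)+3)) := by
    rw [show 3 * (k + 1) = 3*k+1+1+1 by ring, harm_succ, harm_succ, harm_succ]
    push_cast; ring
  have h2 : harm (2 * (k + 1)) = harm (2 * k) + (1/(2*(k:ℝ)+1) + 1/(2*(k:ℝ)+2)) := by
    rw [show 2 * (k + 1) = 2*k+1+1 by ring, harm_succ, harm_succ]
    push_cast; ring
  have h1 : harm (k + 1) = harm k + 1/((k:ℝ)+1) := harm_succ k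
  rw [Ah, Ah, h6, h3, h2, h1]
  have n1 : 6*(k:ℝ)+1 > 0 := by positivity
  have n2 : 6*(k:ℝ)+2 > 0 := by positivity
  have n3 : 6*(k:ℝ)+3 > 0 := by positivity
  have n4 : 6*(k:ℝ)+4 > 0 := by positivity
  have n5 : 6*(k:ℝ)+5 > 0 := by positivity
  have n6 : 6*(k:ℝ)+6 > 0 := by positivity
  have m1 : 3*(k:ℝ)+1 > 0 := by positivity
  have m2 : 3*(k:ℝ)+2 > 0 := by positivity
  have m3 : 3*(k:ℝ)+3 > 0 := by positivity
  have p1 : 2*(k:ℝ)+1 > 0 := by positivity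
  have p2 : 2*(k:ℝ)+2 > 0 := by positivity
  have q1 : (k:ℝ)+1 > 0 := by positivity
  field_simp
  ring

noncomputable def V (k : ℕ) : ℝ :=
  ∑ i ∈ Finset.range k, (432:ℝ) ^ (k - i) * cc i / ((k : ℝ) - i)

lemma V_rec (k : ℕ) :
    ((k:ℝ) + 1) ^ 2 * V (k + 1)
      = 12 * (6 * (k:ℝ) + 1) * (6 * (k:ℝ) + 5) * V k + 432 * (2 * (k:ℝ) + 1) * cc k := by
  -- telescoping function
  set f : ℕ → ℝ := fun i => -(432:ℝ) ^ (k + 1 - i) * (i:ℝ) ^ 2 * cc i / ((k : ℝ) + 1 - i) with hf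
  have hsplit : V (k + 1)
      = (∑ i ∈ Finset.range k, (432:ℝ) ^ (k + 1 - i) * cc i / ((k : ℝ) + 1 - i)) + 432 * cc k := by
    rw [V, Finset.sum_range_succ]
    congr 1
    · apply Finset.sum_congr rfl; intro i hi; push_cast; ring_nf
    · rw [show k + 1 - k = 1 by omega]
      push_cast; ring_nf
  have hstep : ∀ i ∈ Finset.range k,
      ((k:ℝ) + 1) ^ 2 * ((432:ℝ) ^ (k + 1 - i) * cc i / ((k : ℝ) + 1 - i))
        - 12 * (6 * (k:ℝ) + 1) * (6 * (k:ℝ) + 5) * ((432:ℝ) ^ (k - i) * cc i / ((k : ℝ) - i))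
      = f (i + 1) - f i := by
    intro i hi
    rw [Finset.mem_range] at hi
    obtain ⟨j, rfl⟩ : ∃ j, k = i + j + 1 := ⟨k - i - 1, by omega⟩
    rw [hf]
    simp only [show i + j + 1 + 1 - (i + 1) = j + 1 by omega,
      show i + j + 1 + 1 - i = j + 2 by omega, show i + j + 1 - i = j + 1 by omega]
    have hcc : cc (i + 1) = 12 * (6 * (i:ℝ) + 1) * (6 * (i:ℝ) + 5) * cc i / ((i:ℝ) + 1) ^ 2 := by
      rw [eq_div_iff (by positivity), mul_comm]
      exact cc_rec i
    rw [hcc]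
    have d1 : ((j:ℝ) + 1) ≠ 0 := by positivity
    have d2 : ((j:ℝ) + 2) ≠ 0 := by positivity
    have d3 : ((i:ℝ) + 1) ≠ 0 := by positivity
    push_cast
    rw [show ((i:ℝ) + (j:ℝ) + 1 + 1 - (i:ℝ)) = (j:ℝ) + 2 by ring,
        show ((i:ℝ) + (j:ℝ) + 1 - (i:ℝ)) = (j:ℝ) + 1 by ring,
        show ((i:ℝ) + (j:ℝ) + 1 + 1 - ((i:ℝ) + 1)) = (j:ℝ) + 1 by ring]
    field_simp
    ring
  have htel : ∑ i ∈ Finset.range k, (f (i + 1) - f i) = f k - f 0 := Finset.sum_range_sub f k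
  have hf0 : f 0 = 0 := by simp [hf]
  have hfk : f k = -432 * (k:ℝ) ^ 2 * cc k := by
    rw [hf]; simp only [show k + 1 - k = 1 by omega]
    push_cast; ring_nf
  rw [hsplit, V, mul_add, Finset.mul_sum, Finset.mul_sum]
  have : ∑ i ∈ Finset.range k, ((k:ℝ) + 1) ^ 2 * ((432:ℝ) ^ (k + 1 - i) * cc i / ((k : ℝ) + 1 - i))
      = ∑ i ∈ Finset.range k, (12 * (6 * (k:ℝ) + 1) * (6 * (k:ℝ) + 5) * ((432:ℝ) ^ (k - i) * cc i / ((k : ℝ) - i))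
          + (f (i + 1) - f i)) := by
    apply Finset.sum_congr rfl; intro i hi
    have := hstep i hi; linarith
  rw [this, Finset.sum_add_distrib, htel, hf0, hfk]
  ring

lemma key_s11 (k : ℕ) : V k = cc k * Ah k := by
  induction k with
  | zero => simp [V, Ah_zero]
  | succ k ih =>
    have h1 := V_rec k
    rw [ih] at h1
    have h2 : ((k:ℝ) + 1) ^ 2 * (cc (k + 1) * Ah (k + 1))
        = 12 * (6 * (k:ℝ) + 1) * (6 * (k:ℝ) + 5) * (cc k * Ah k) + 432 * (2 * (k:ℝ) + 1) * cc k := by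
      rw [Ah_rec k]
      have hr := cc_rec k
      have n1 : 6*(k:ℝ)+1 ≠ 0 := by positivity
      have n5 : 6*(k:ℝ)+5 ≠ 0 := by positivity
      field_simp
      linear_combination ((Ah k * (6*(k:ℝ)+1) + 6) * (6*(k:ℝ)+5) + 6*(6*(k:ℝ)+1)) * hr
    have hk2 : ((k:ℝ) + 1) ^ 2 ≠ 0 := by positivity
    apply mul_left_cancel₀ hk2
    rw [h1, h2]

lemma Ah_abs_le (k : ℕ) : |Ah k| ≤ 50 * k := by
  have h6 := harm_le (6 * k); have h3 := harm_le (3 * k); have h2 := harm_le (2 * k)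
  have h1 := harm_le k
  have n6 := harm_nonneg (6 * k); have n3 := harm_nonneg (3 * k)
  have n2 := harm_nonneg (2 * k); have n1 := harm_nonneg k
  push_cast at h6 h3 h2 h1
  rw [abs_le, Ah]
  constructor <;> nlinarith [k.cast_nonneg (α := ℝ)]

lemma inner_eq (x : ℂ) (hx0 : x ≠ 0) (n : ℕ) :
    ∑ k ∈ Finset.range (n + 1), ((432 / x) ^ k / (k : ℂ)) * ((cc (n - k) : ℂ) / x ^ (n - k))
      = ((cc n : ℝ) : ℂ) / x ^ n * ((Ah n : ℝ) : ℂ) := by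
  rw [Finset.sum_range_succ']
  have h0 : ((432 / x) ^ 0 / ((0:ℕ) : ℂ)) * ((cc (n - 0) : ℂ) / x ^ (n - 0)) = 0 := by
    simp
  rw [h0, add_zero]
  have hrefl := (Finset.sum_range_reflect
    (fun k => ((432 / x) ^ (k + 1) / ((k + 1 : ℕ) : ℂ)) * ((cc (n - (k + 1)) : ℂ) / x ^ (n - (k + 1)))) n)
  rw [← hrefl]
  have hterm : ∀ j ∈ Finset.range n,
      ((432 / x) ^ ((n - 1 - j) + 1) / (((n - 1 - j) + 1 : ℕ) : ℂ))
          * ((cc (n - ((n - 1 - j) + 1)) : ℂ) / x ^ (n - ((n - 1 - j) + 1)))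
        = (((432:ℝ) ^ (n - j) * cc j / ((n : ℝ) - j) : ℝ) : ℂ) / x ^ n := by
    intro j hj
    rw [Finset.mem_range] at hj
    obtain ⟨m, rfl⟩ : ∃ m, n = j + m + 1 := ⟨n - j - 1, by omega⟩
    rw [show j + m + 1 - 1 - j = m by omega, show j + m + 1 - (m + 1) = j by omega,
        show j + m + 1 - j = m + 1 by omega]
    push_cast
    rw [show ((j:ℂ) + (m:ℂ) + 1 - (j:ℂ)) = (m:ℂ) + 1 by ring]
    rw [div_pow]
    have hxp : x ^ (m + 1) ≠ 0 := pow_ne_zero _ hx0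
    have hxj : x ^ j ≠ 0 := pow_ne_zero _ hx0
    have hm : ((m:ℂ) + 1) ≠ 0 := by
      have := Nat.cast_add_one_ne_zero (R := ℂ) m
      simpa using this
    field_simp
    ring_nf
  rw [Finset.sum_congr rfl hterm, ← Finset.sum_div]
  have h2 : ∑ j ∈ Finset.range n, (((432:ℝ) ^ (n - j) * cc j / ((n : ℝ) - j) : ℝ) : ℂ)
      = ((V n : ℝ) : ℂ) := by
    rw [V, Complex.ofReal_sum]
  rw [h2, key_s11 n]
  push_cast
  ring

noncomputable def dd (x : ℂ) (j : ℕ) : ℂ := (432 / x) ^ j / (j : ℂ)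
noncomputable def ee (x : ℂ) (i : ℕ) : ℂ := ((cc i : ℝ) : ℂ) / x ^ i

theorem main_aux (x : ℂ) (hxnorm : (432 : ℝ) < ‖x‖) :
    Summable (fun k : ℕ => ee x k * ((Ah k : ℝ) : ℂ)) ∧
    Summable (fun k : ℕ => ee x k) ∧
    ∑' k : ℕ, ee x k * ((Ah k : ℝ) : ℂ)
      = Complex.log (x / (x - 432)) * ∑' k : ℕ, ee x k := by
  have hxpos : (0:ℝ) < ‖x‖ := by linarith
  have hx0 : x ≠ 0 := by
    intro h; rw [h] at hxpos; simp at hxpos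
  have hwnorm : ‖(432 : ℂ) / x‖ = 432 / ‖x‖ := by
    rw [norm_div]; norm_num
  have hw1 : ‖(432 : ℂ) / x‖ < 1 := by
    rw [hwnorm, div_lt_one hxpos]; exact hxnorm
  have hr0 : (0:ℝ) ≤ 432 / ‖x‖ := by positivity
  have hr1 : 432 / ‖x‖ < 1 := by rw [div_lt_one hxpos]; exact hxnorm
  have hd_norm : Summable (fun j => ‖dd x j‖) := by
    apply Summable.of_nonneg_of_le (fun j => norm_nonneg _)
      (f := fun j => (432 / ‖x‖) ^ j)
    · intro j
      rw [dd, norm_div, norm_pow, hwnorm]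
      cases j with
      | zero => simp
      | succ m =>
        rw [Complex.norm_natCast]
        have h1 : (1:ℝ) ≤ ((m+1 : ℕ) : ℝ) := by
          exact_mod_cast Nat.one_le_iff_ne_zero.mpr (Nat.succ_ne_zero m)
        calc (432 / ‖x‖) ^ (m+1) / ((m+1 : ℕ) : ℝ) ≤ (432 / ‖x‖) ^ (m+1) / 1 := by
              apply div_le_div_of_nonneg_left _ _ h1 <;> positivity
          _ = (432 / ‖x‖) ^ (m+1) := by ring
    · exact summable_geometric_of_lt_one hr0 hr1
  have he_bound : ∀ i, ‖ee x i‖ ≤ (432 / ‖x‖) ^ i := by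
    intro i
    rw [ee, norm_div, norm_pow, Complex.norm_real, Real.norm_eq_abs,
      abs_of_pos (cc_pos i), div_pow]
    apply div_le_div₀ (by positivity) (cc_le i) (by positivity) le_rfl
  have he_norm : Summable (fun i => ‖ee x i‖) := by
    apply Summable.of_nonneg_of_le (fun i => norm_nonneg _) he_bound
    exact summable_geometric_of_lt_one hr0 hr1
  have he_sum : Summable (fun i => ee x i) := he_norm.of_norm
  have hG_norm : Summable (fun k => ‖ee x k * ((Ah k : ℝ) : ℂ)‖) := by
    apply Summable.of_nonneg_of_le (fun k => norm_nonneg _)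
      (f := fun k : ℕ => 50 * (((k:ℝ) ^ 1) * (432 / ‖x‖) ^ k))
    · intro k
      rw [norm_mul, Complex.norm_real, Real.norm_eq_abs]
      calc ‖ee x k‖ * |Ah k| ≤ (432 / ‖x‖) ^ k * (50 * k) := by
            apply mul_le_mul (he_bound k) (Ah_abs_le k) (abs_nonneg _) (by positivity)
        _ = 50 * (((k:ℝ) ^ 1) * (432 / ‖x‖) ^ k) := by ring
    · apply Summable.mul_left
      exact summable_pow_mul_geometric_of_norm_lt_one (R := ℝ) 1
        (by rwa [Real.norm_eq_abs, abs_of_nonneg hr0])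
  have hG_sum : Summable (fun k => ee x k * ((Ah k : ℝ) : ℂ)) := hG_norm.of_norm
  have hargne : ((x - 432) / x).arg ≠ Real.pi := by
    intro h
    rw [Complex.arg_eq_pi_iff] at h
    have hre : ((x - 432) / x).re > 0 := by
      have heq : (x - 432) / x = 1 - 432 / x := by field_simp
      rw [heq]
      have habs := Complex.abs_re_le_norm (432 / x)
      rw [hwnorm] at habs
      have h2 : (432 / x).re < 1 := by
        calc (432 / x).re ≤ |(432 / x).re| := le_abs_self _
          _ ≤ 432 / ‖x‖ := habs
          _ < 1 := hr1
      simp only [Complex.sub_re, Complex.one_re]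
      linarith
    linarith [h.1]
  have hlog : ∑' j, dd x j = Complex.log (x / (x - 432)) := by
    have hs : HasSum (fun j : ℕ => (432 / x) ^ j / (j : ℂ))
        (-Complex.log (1 - 432 / x)) :=
      Complex.hasSum_taylorSeries_neg_log hw1
    have hs' : HasSum (fun j => dd x j) (-Complex.log (1 - 432 / x)) := hs
    rw [hs'.tsum_eq]
    have heq : (1 : ℂ) - 432 / x = (x - 432) / x := by field_simp
    rw [heq, show x / (x - 432) = ((x - 432) / x)⁻¹ from by rw [inv_div],
      Complex.log_inv _ hargne]
  have hcauchy := tsum_mul_tsum_eq_tsum_sum_range_of_summable_norm hd_norm he_norm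
  have hinner : ∀ n : ℕ, ∑ k ∈ Finset.range (n + 1), dd x k * ee x (n - k)
      = ee x n * ((Ah n : ℝ) : ℂ) := by
    intro n
    have h := inner_eq x hx0 n
    simp only [dd, ee]
    exact h
  refine ⟨hG_sum, he_sum, ?_⟩
  calc ∑' k : ℕ, ee x k * ((Ah k : ℝ) : ℂ)
      = ∑' n : ℕ, ∑ k ∈ Finset.range (n + 1), dd x k * ee x (n - k) :=
        tsum_congr fun n => (hinner n).symm
    _ = (∑' j, dd x j) * ∑' i, ee x i := hcauchy.symm
    _ = Complex.log (x / (x - 432)) * ∑' k, ee x k := by rw [hlog]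

theorem stmt_11 (x : ℂ) (hx : ‖x‖ > 432) :
    Summable (fun k : ℕ => (((Nat.choose (3 * k) k : ℝ) * (Nat.choose (6 * k) (3 * k) : ℝ) : ℝ) : ℂ) / x ^ k * ((6 * harm (6 * k) - 3 * harm (3 * k) - 2 * harm (2 * k) + harm k : ℝ) : ℂ)) ∧
    Summable (fun k : ℕ => (((Nat.choose (3 * k) k : ℝ) * (Nat.choose (6 * k) (3 * k) : ℝ) : ℝ) : ℂ) / x ^ k) ∧
    ∑' k : ℕ, (((Nat.choose (3 * k) k : ℝ) * (Nat.choose (6 * k) (3 * k) : ℝ) : ℝ) : ℂ) / x ^ k * ((6 * harm (6 * k) - 3 * harm (3 * k) - 2 * harm (2 * k) + harm k : ℝ) : ℂ) =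
      Complex.log (x / (x - 432)) * ∑' k : ℕ, (((Nat.choose (3 * k) k : ℝ) * (Nat.choose (6 * k) (3 * k) : ℝ) : ℝ) : ℂ) / x ^ k := by
  have hxnorm : (432 : ℝ) < ‖x‖ := by exact hx
  have h := main_aux x hxnorm
  have h1 : (fun k : ℕ => (((Nat.choose (3 * k) k : ℝ) * (Nat.choose (6 * k) (3 * k) : ℝ) : ℝ) : ℂ) / x ^ k * ((6 * harm (6 * k) - 3 * harm (3 * k) - 2 * harm (2 * k) + harm k : ℝ) : ℂ))
      = fun k : ℕ => ee x k * ((Ah k : ℝ) : ℂ) := rfl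
  have h2 : (fun k : ℕ => (((Nat.choose (3 * k) k : ℝ) * (Nat.choose (6 * k) (3 * k) : ℝ) : ℝ) : ℂ) / x ^ k)
      = fun k : ℕ => ee x k := rfl
  rw [h1, h2]
  exact h
end
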